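/- Assume c = 3m and that lim_{ρ→c⁺} A'(ρ) exists and is finite. Then A'(c) := lim_{ρ→c⁺} A'(ρ) = −3 r''(c)/r'(c)^3. -/

import Mathlib

open Filter Set Topology

/-- If `c = 3m` and `lim_{ρ→c⁺} A'` exists and is finite, then
`A'(c) = −3 r''(c)/r'(c)³`. -/
theorem stmt6 (c m : ℝ) (hc : 0 < c) (hm : m = c / 3)
    (r r' r'' : ℝ → ℝ)
    (hr : ∀ ρ ∈ Set.Ici c, HasDerivWithinAt r (r' ρ) (Set.Ici c) ρ)
    (hr'd : ∀ ρ ∈ Set.Ici c, HasDerivWithinAt r' (r'' ρ) (Set.Ici c) ρ)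
    (hr'' : ContinuousOn r'' (Set.Ici c))
    (hr'gt : ∀ ρ ∈ Set.Ici c, 1 < r' ρ)
    (hrc : r c = 0)
    (hrpos : ∀ ρ ∈ Set.Ioi c, 0 < r ρ)
    (A A' : ℝ → ℝ)
    (hA : ∀ ρ ∈ Set.Ioi c, HasDerivAt A (A' ρ) ρ)
    (hode : ∀ ρ ∈ Set.Ioi c,
      r ρ ^ 2 * A' ρ - 2 * r ρ * r' ρ * A ρ = 2 * (c - ρ))
    (hAc : Tendsto A (nhdsWithin c (Set.Ioi c)) (nhds (1 / r' c ^ 2)))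
    (L : ℝ)
    (hL : Tendsto A' (nhdsWithin c (Set.Ioi c)) (nhds L)) :
    L = -3 * r'' c / r' c ^ 3 := by
  have hp1 : (1 : ℝ) < r' c := hr'gt c Set.self_mem_Ici
  have hp : r' c ≠ 0 := by linarith
  -- derivatives at interior points
  have hrD : ∀ x ∈ Set.Ioi c, HasDerivAt r (r' x) x := fun x hx =>
    (hr x (Set.mem_Ici.mpr (le_of_lt hx))).hasDerivAt (Ici_mem_nhds hx)
  have hr'D : ∀ x ∈ Set.Ioi c, HasDerivAt r' (r'' x) x := fun x hx =>
    (hr'd x (Set.mem_Ici.mpr (le_of_lt hx))).hasDerivAt (Ici_mem_nhds hx)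
  -- continuity facts at c from the right
  have hr't : Tendsto r' (𝓝[>] c) (𝓝 (r' c)) :=
    ((hr'd c Set.self_mem_Ici).continuousWithinAt.mono Ioi_subset_Ici_self).tendsto
  have hrt : Tendsto r (𝓝[>] c) (𝓝 0) := by
    have := ((hr c Set.self_mem_Ici).continuousWithinAt.mono Ioi_subset_Ici_self).tendsto
    rwa [hrc] at this
  have hr''t : Tendsto r'' (𝓝[>] c) (𝓝 (r'' c)) :=
    ((hr''.continuousWithinAt (self_mem_Ici)).mono Ioi_subset_Ici_self).tendsto
  -- slope limit : r ρ / (ρ - c) → r' c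
  have hslope : Tendsto (fun ρ => r ρ / (ρ - c)) (𝓝[>] c) (𝓝 (r' c)) := by
    have h := hasDerivWithinAt_iff_tendsto_slope.mp (hr c Set.self_mem_Ici)
    rw [show Set.Ici c \ {c} = Set.Ioi c from Set.Ici_sdiff_left] at h
    refine h.congr' ?_
    filter_upwards [self_mem_nhdsWithin] with x hx
    simp [slope_def_field, hrc, div_eq_iff (sub_ne_zero.mpr (ne_of_gt (Set.mem_Ioi.mp hx)))]
  -- L'Hôpital (2) : (r' ρ * (ρ - c) - r ρ) / (ρ - c)^2 → r'' c / 2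
  have hG : Tendsto (fun ρ => (r' ρ * (ρ - c) - r ρ) / (ρ - c) ^ 2) (𝓝[>] c)
      (𝓝 (r'' c / 2)) := by
    apply HasDerivAt.lhopital_zero_right_on_Ioo (show c < c + 1 by linarith)
      (f' := fun ρ => r'' ρ * (ρ - c)) (g' := fun ρ => 2 * (ρ - c))
    · intro x hx
      have h1 := (hr'D x hx.1).mul ((hasDerivAt_id x).sub_const c)
      have h2 := hrD x hx.1
      have := h1.sub h2
      exact this.congr_deriv (by simp only [id_eq]; ring)
    · intro x hx
      have := ((hasDerivAt_id x).sub_const c).pow 2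
      exact this.congr_deriv (by simp only [id_eq]; push_cast; ring)
    · intro x hx
      have : (0:ℝ) < x - c := by linarith [hx.1]
      positivity
    · have : Tendsto (fun ρ => r' ρ * (ρ - c) - r ρ) (𝓝[>] c) (𝓝 (r' c * (c - c) - 0)) := by
        exact (hr't.mul (tendsto_nhdsWithin_of_tendsto_nhds
          ((continuous_id.sub continuous_const).tendsto c))).sub hrt
      simpa using this
    · have : Tendsto (fun ρ => (ρ - c) ^ 2) (𝓝[>] c) (𝓝 ((c - c) ^ 2)) :=
        tendsto_nhdsWithin_of_tendsto_nhds
          (((continuous_id.sub continuous_const).pow 2).tendsto c)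
      simpa using this
    · have : Tendsto (fun ρ => r'' ρ / 2) (𝓝[>] c) (𝓝 (r'' c / 2)) := hr''t.div_const 2
      refine this.congr' ?_
      filter_upwards [self_mem_nhdsWithin] with x hx
      have hxc : x - c ≠ 0 := sub_ne_zero.mpr (ne_of_gt hx)
      field_simp
  -- L'Hôpital (1) : (r' ρ ^ 2 * A ρ - 1) / (ρ - c) → M
  set M : ℝ := 2 * r' c * r'' c * (1 / r' c ^ 2) + r' c ^ 2 * L with hM
  have hF : Tendsto (fun ρ => (r' ρ ^ 2 * A ρ - 1) / (ρ - c)) (𝓝[>] c) (𝓝 M) := by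
    apply HasDerivAt.lhopital_zero_right_on_Ioo (show c < c + 1 by linarith)
      (f' := fun ρ => 2 * r' ρ * r'' ρ * A ρ + r' ρ ^ 2 * A' ρ)
      (g' := fun _ => (1 : ℝ))
    · intro x hx
      have h1 : HasDerivAt (fun ρ => r' ρ ^ 2) (2 * r' x * r'' x) x := by
        have := (hr'D x hx.1).pow 2
        exact this.congr_deriv (by push_cast; ring)
      have := (h1.mul (hA x hx.1)).sub_const 1
      exact this.congr_deriv (by ring)
    · intro x hx
      simpa using ((hasDerivAt_id x).sub_const c)
    · intro x _; exact one_ne_zero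
    · have : Tendsto (fun ρ => r' ρ ^ 2 * A ρ - 1) (𝓝[>] c)
          (𝓝 (r' c ^ 2 * (1 / r' c ^ 2) - 1)) := ((hr't.pow 2).mul hAc).sub_const 1
      have h0 : r' c ^ 2 * (1 / r' c ^ 2) - 1 = 0 := by field_simp; ring
      rwa [h0] at this
    · have : Tendsto (fun ρ => ρ - c) (𝓝[>] c) (𝓝 (c - c)) :=
        tendsto_nhdsWithin_of_tendsto_nhds ((continuous_id.sub continuous_const).tendsto c)
      simpa using this
    · have : Tendsto (fun ρ => 2 * r' ρ * r'' ρ * A ρ + r' ρ ^ 2 * A' ρ) (𝓝[>] c) (𝓝 M) := by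
        rw [hM]
        exact (((((tendsto_const_nhds.mul hr't)).mul hr''t).mul hAc)).add ((hr't.pow 2).mul hL)
      simpa using this
  -- the other expression for the same limit, via the ODE
  have hF2 : Tendsto (fun ρ => (r' ρ ^ 2 * A ρ - 1) / (ρ - c)) (𝓝[>] c)
      (𝓝 (r' c * r' c * L / 2 + (r'' c / 2) / r' c)) := by
    have h1 : Tendsto (fun ρ => r' ρ * (r ρ / (ρ - c)) * A' ρ / 2 +
        ((r' ρ * (ρ - c) - r ρ) / (ρ - c) ^ 2) / (r ρ / (ρ - c))) (𝓝[>] c)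
        (𝓝 (r' c * r' c * L / 2 + (r'' c / 2) / r' c)) :=
      (((hr't.mul hslope).mul hL).div_const 2).add (hG.div hslope hp)
    refine h1.congr' ?_
    filter_upwards [self_mem_nhdsWithin] with x hx
    have hxc : x - c ≠ 0 := sub_ne_zero.mpr (ne_of_gt hx)
    have hrx : r x ≠ 0 := ne_of_gt (hrpos x hx)
    have hodex := hode x hx
    field_simp
    linear_combination (r' x) * hodex
  have key : M = r' c * r' c * L / 2 + (r'' c / 2) / r' c :=
    tendsto_nhds_unique hF hF2
  rw [hM] at key
  rw [eq_div_iff (by positivity : r' c ^ 3 ≠ 0)]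
  field_simp at key
  have h2 : (2 * r' c ^ 2) * (L * r' c ^ 3 + 3 * r'' c) = 0 := by linear_combination (2 * r' c ^ 2) * key
  rcases mul_eq_zero.mp h2 with h | h
  · exfalso; nlinarith [hp1]
  · linarith
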